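/- Let d, p ≥ 1, let c ≥ 1 be a chunk size, let Q_1, …, Q_t, K_1, …, K_t ∈ ℝ^d and V_1, …, V_t ∈ ℝ^v, and fix i = nc + m with n ≥ 0 and 1 ≤ m ≤ c. Define the chunk state S = Σ_{j=1}^{nc} spow_p(K_j) V_j^T ∈ ℝ^{C(d+p−1,p)×v}, the state normalizer γ = Σ_{j=1}^{nc} spow_p(K_j), the intra-chunk output Y_i = Σ_{j=nc+1}^{i} (⟨Q_i, K_j⟩)^p V_j, and the intra-chunk normalizer ζ_i = Σ_{j=nc+1}^{i} (⟨Q_i, K_j⟩)^p. If Σ_{j=1}^{i} (⟨Q_i, K_j⟩)^p ≠ 0, then (Y_i + S^T spow_p(Q_i)) / (ζ_i + ⟨spow_p(Q_i), γ⟩) = (Σ_{j=1}^{i} (⟨Q_i, K_j⟩)^p V_j) / (Σ_{j=1}^{i} (⟨Q_i, K_j⟩)^p); that is, the fused-query-state computation produces exactly the sum-normalized power attention output. -/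

import Mathlib

open scoped Classical

/-- hist_k(i): the number of positions j with i_j = k. -/
def hist {p d : ℕ} (i : Fin p → Fin d) (k : Fin d) : ℕ :=
  (Finset.univ.filter (fun j => i j = k)).card

/-- The symmetric power embedding spow_p : ℝ^d → ℝ^{|NDMI^p_d|}, indexed by
non-decreasing multi-indices (monotone functions Fin p → Fin d), with entry
√(p! / ∏_k hist_k(i)!) · ∏_j x_{i_j}. -/
noncomputable def spow {d : ℕ} (p : ℕ) (x : Fin d → ℝ)
    (i : {f : Fin p → Fin d // Monotone f}) : ℝ :=
  Real.sqrt ((p.factorial : ℝ) / ∏ k, ((hist i.1 k).factorial : ℝ)) * ∏ j, x (i.1 j)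

lemma hist_eq_count {p d : ℕ} (f : Fin p → Fin d) (a : Fin d) :
    hist f a = Multiset.count a ((List.ofFn f : List (Fin d)) : Multiset (Fin d)) := by
  rw [← Fin.univ_val_map, Multiset.count_map, hist]
  rw [Finset.card, Finset.filter_val]
  congr 1
  exact Multiset.filter_congr (fun x _ => by constructor <;> (intro h; exact h.symm))

lemma sum_hist {p d : ℕ} (f : Fin p → Fin d) : ∑ k, hist f k = p := by
  have := Finset.card_eq_sum_card_fiberwise
    (f := f) (s := (Finset.univ : Finset (Fin p))) (t := Finset.univ) (fun x _ => Finset.mem_univ _)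
  simpa [hist] using this.symm

lemma prod_comp_hist {p d : ℕ} (f : Fin p → Fin d) (a : Fin d → ℝ) :
    ∏ j, a (f j) = ∏ i, a i ^ hist f i := by
  rw [← Finset.prod_fiberwise_of_maps_to' (g := f)
    (fun (x : Fin p) (_ : x ∈ Finset.univ) => Finset.mem_univ (f x)) a]
  refine Finset.prod_congr rfl (fun i _ => ?_)
  rw [hist, Finset.prod_const]

lemma hist_injective {p d : ℕ} {f g : Fin p → Fin d} (hf : Monotone f) (hg : Monotone g)
    (h : ∀ a, hist f a = hist g a) : f = g := by
  have hm : ((List.ofFn f : List (Fin d)) : Multiset (Fin d)) = (List.ofFn g : List (Fin d)) := by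
    ext a
    rw [← hist_eq_count, ← hist_eq_count, h]
  rw [Multiset.coe_eq_coe] at hm
  exact List.ofFn_injective (List.Perm.eq_of_pairwise'
    (List.sortedLE_ofFn_iff.mpr hf).pairwise (List.sortedLE_ofFn_iff.mpr hg).pairwise hm)

lemma hist_surjective {p d : ℕ} (k : Fin d → ℕ) (hk : ∑ i, k i = p) :
    ∃ f : Fin p → Fin d, Monotone f ∧ ∀ a, hist f a = k a := by
  set m : Multiset (Fin d) := ∑ i, k i • ({i} : Multiset (Fin d)) with hm
  have hcount : ∀ a, m.count a = k a := by
    intro a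
    simp [hm, Multiset.count_sum', Multiset.count_nsmul, Multiset.count_singleton]
  have hcard : Multiset.card m = p := by
    rw [← hk]
    simp [hm]
  set l := m.sort (· ≤ ·) with hls
  have hl : l.length = p := by rw [hls, Multiset.length_sort, hcard]
  refine ⟨fun j => l.get (Fin.cast hl.symm j), ?_, ?_⟩
  · exact (Multiset.pairwise_sort _ _).sortedLE.monotone_get.comp (fun _ _ h => h)
  · intro a
    rw [hist_eq_count]
    have : List.ofFn (fun j : Fin p => l.get (Fin.cast hl.symm j)) = l := by
      rw [← List.ofFn_congr hl l.get, List.ofFn_get]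
    rw [this, hls, Multiset.sort_eq, hcount]

lemma spow_mul_spow_sum (d p : ℕ) (x y : Fin d → ℝ) :
    ∑ idx : {f : Fin p → Fin d // Monotone f}, spow p x idx * spow p y idx
      = (∑ b, x b * y b) ^ p := by
  rw [Finset.sum_pow_eq_sum_piAntidiag]
  refine Finset.sum_bij (fun idx _ => hist idx.1) ?_ ?_ ?_ ?_
  · intro idx _
    rw [Finset.mem_piAntidiag]
    exact ⟨sum_hist idx.1, fun i _ => Finset.mem_univ i⟩
  · intro a _ b _ h
    exact Subtype.ext (hist_injective a.2 b.2 (fun k => congrFun h k))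
  · intro k hk
    rw [Finset.mem_piAntidiag] at hk
    obtain ⟨f, hf, hhist⟩ := hist_surjective k hk.1
    exact ⟨⟨f, hf⟩, Finset.mem_univ _, funext hhist⟩
  · intro idx _
    have hprodpos : (0:ℝ) < ∏ k, ((hist idx.1 k).factorial : ℝ) := by positivity
    have hr : (0:ℝ) ≤ (p.factorial : ℝ) / ∏ k, ((hist idx.1 k).factorial : ℝ) := by positivity
    have hmult : ((Nat.multinomial Finset.univ (hist idx.1)) : ℝ)
        = (p.factorial : ℝ) / ∏ k, ((hist idx.1 k).factorial : ℝ) := by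
      have := Nat.multinomial_spec (Finset.univ : Finset (Fin d)) (hist idx.1)
      rw [sum_hist idx.1] at this
      field_simp
      rw [mul_comm]
      exact_mod_cast congrArg (Nat.cast : ℕ → ℝ) this
    rw [spow, spow, mul_mul_mul_comm, Real.mul_self_sqrt hr, ← hmult,
      ← Finset.prod_mul_distrib]
    congr 1
    rw [prod_comp_hist idx.1 (fun b => x b * y b)]

lemma icc_sum_split (nc m' : ℕ) (g : ℕ → ℝ) :
    (∑ j ∈ Finset.Icc (nc + 1) (nc + m'), g j) + (∑ j ∈ Finset.Icc 1 nc, g j)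
      = ∑ j ∈ Finset.Icc 1 (nc + m'), g j := by
  rw [show (1:ℕ) = 0 + 1 from rfl, Finset.Icc_add_one_left_eq_Ioc, Finset.Icc_add_one_left_eq_Ioc,
    zero_add, Finset.Icc_add_one_left_eq_Ioc,
    add_comm]
  exact Finset.sum_Ioc_consecutive _ (Nat.zero_le nc) (Nat.le_add_right nc m')

/-- With chunk state S = Σ_{j=1}^{nc} spow_p(K_j) V_j^T, state
normalizer γ = Σ_{j=1}^{nc} spow_p(K_j), intra-chunk output
Y_i = Σ_{j=nc+1}^{i} (⟨Q_i,K_j⟩)^p V_j and intra-chunk normalizer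
ζ_i = Σ_{j=nc+1}^{i} (⟨Q_i,K_j⟩)^p, where i = nc + m with 1 ≤ m ≤ c and
nc + m ≤ t, if Σ_{j=1}^{i} (⟨Q_i,K_j⟩)^p ≠ 0, then
(Y_i + S^T spow_p(Q_i)) / (ζ_i + ⟨spow_p(Q_i), γ⟩)
  = (Σ_{j=1}^{i} (⟨Q_i,K_j⟩)^p V_j) / (Σ_{j=1}^{i} (⟨Q_i,K_j⟩)^p). -/
theorem fused_query_state_correct
    (d p v c t n m : ℕ) (hd : 1 ≤ d) (hp : 1 ≤ p) (hc : 1 ≤ c)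
    (hm1 : 1 ≤ m) (hmc : m ≤ c) (hit : n * c + m ≤ t)
    (Q K : ℕ → Fin d → ℝ) (V : ℕ → Fin v → ℝ)
    (hne : (∑ j ∈ Finset.Icc 1 (n * c + m),
        (∑ b, Q (n * c + m) b * K j b) ^ p) ≠ 0) :
    ∀ a : Fin v,
      ((∑ j ∈ Finset.Icc (n * c + 1) (n * c + m),
            (∑ b, Q (n * c + m) b * K j b) ^ p * V j a)
          + ∑ idx : {f : Fin p → Fin d // Monotone f},
              spow p (Q (n * c + m)) idx
                * (∑ j ∈ Finset.Icc 1 (n * c), spow p (K j) idx * V j a))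
        / ((∑ j ∈ Finset.Icc (n * c + 1) (n * c + m),
              (∑ b, Q (n * c + m) b * K j b) ^ p)
            + ∑ idx : {f : Fin p → Fin d // Monotone f},
                spow p (Q (n * c + m)) idx
                  * (∑ j ∈ Finset.Icc 1 (n * c), spow p (K j) idx))
      = (∑ j ∈ Finset.Icc 1 (n * c + m),
            (∑ b, Q (n * c + m) b * K j b) ^ p * V j a)
          / (∑ j ∈ Finset.Icc 1 (n * c + m),
              (∑ b, Q (n * c + m) b * K j b) ^ p) := by
  intro a
  have h1 : ∑ idx : {f : Fin p → Fin d // Monotone f},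
      spow p (Q (n * c + m)) idx
        * (∑ j ∈ Finset.Icc 1 (n * c), spow p (K j) idx * V j a)
      = ∑ j ∈ Finset.Icc 1 (n * c),
          (∑ b, Q (n * c + m) b * K j b) ^ p * V j a := by
    simp_rw [Finset.mul_sum]
    rw [Finset.sum_comm]
    refine Finset.sum_congr rfl (fun j _ => ?_)
    simp_rw [← mul_assoc, ← Finset.sum_mul]
    rw [spow_mul_spow_sum]
  have h2 : ∑ idx : {f : Fin p → Fin d // Monotone f},
      spow p (Q (n * c + m)) idx
        * (∑ j ∈ Finset.Icc 1 (n * c), spow p (K j) idx)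
      = ∑ j ∈ Finset.Icc 1 (n * c),
          (∑ b, Q (n * c + m) b * K j b) ^ p := by
    simp_rw [Finset.mul_sum]
    rw [Finset.sum_comm]
    refine Finset.sum_congr rfl (fun j _ => ?_)
    exact spow_mul_spow_sum d p _ _
  rw [h1, h2, icc_sum_split, icc_sum_split]
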